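/- Fix σ > 0, a > 0, and define u(a,h) := σ√(2 log(1/h)) + 1 - (σ/2)·(log log(1/h))/√(2 log(1/h)) - σ·(log(2a√π))/√(2 log(1/h)) for h ∈ (0,1). If v: (0,∞) → ℝ satisfies v(h)·√(log(1/h)) → 0 as h → 0⁺, then P(u(a,h) + v(h) + σN ∈ [-1,1]) / (a·h) → 1 as h → 0⁺, where N is a standard Gaussian. -/

import Mathlib

open MeasureTheory ProbabilityTheory Real Filter Set

/-- The height `u(a,h)` of the boundary conditions, chosen so that the contact
probability is asymptotically `a·h`. -/
noncomputable def uHeight (σ a h : ℝ) : ℝ :=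
  σ * Real.sqrt (2 * Real.log (1 / h)) + 1
    - (σ / 2) * Real.log (Real.log (1 / h)) / Real.sqrt (2 * Real.log (1 / h))
    - σ * Real.log (2 * a * Real.sqrt Real.pi) / Real.sqrt (2 * Real.log (1 / h))

lemma stmt7_sqrt_atTop : Tendsto Real.sqrt atTop atTop := by
  have h := tendsto_rpow_atTop (y := (1/2:ℝ)) (by norm_num)
  exact h.congr (fun x => (Real.sqrt_eq_rpow x).symm)

lemma stmt7_log_div_sqrt : Tendsto (fun L : ℝ => Real.log L / Real.sqrt (2*L)) atTop (nhds 0) := by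
  have h1 : Real.log =o[atTop] (fun L : ℝ => Real.sqrt (2*L)) := by
    have h2 := isLittleO_log_rpow_atTop (by norm_num : (0:ℝ) < 1/2)
    have h3 : (fun L : ℝ => L ^ (1/2 : ℝ)) =O[atTop] (fun L : ℝ => Real.sqrt (2*L)) := by
      apply Asymptotics.IsBigO.of_bound 1
      filter_upwards [eventually_ge_atTop (0:ℝ)] with L hL
      rw [← Real.sqrt_eq_rpow]
      simp only [norm_eq_abs, abs_of_nonneg (Real.sqrt_nonneg _), one_mul]
      exact Real.sqrt_le_sqrt (by linarith)
    exact h2.trans_isBigO h3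
  exact h1.tendsto_div_nhds_zero

lemma stmt7_t_eq (σ a h L vv s w : ℝ) (hσ : 0 < σ) (hs0 : 0 < s)
    (hLdef : Real.log (1/h) = L) (hs : s = Real.sqrt (2*L))
    (hw : w = (-(Real.log L/2) - Real.log (2*a*Real.sqrt Real.pi))/s + vv/σ) :
    (uHeight σ a h + vv - 1)/σ = s + w := by
  rw [uHeight, hLdef, ← hs, hw]
  field_simp
  ring

lemma stmt7_exp_eq (σ a h L vv s w d : ℝ) (hσ : 0 < σ) (ha : 0 < a) (hh : 0 < h) (hL : 0 < L)
    (hLdef : Real.log (1/h) = L) (hs : s = Real.sqrt (2*L))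
    (hw : w = (-(Real.log L/2) - Real.log (2*a*Real.sqrt Real.pi))/s + vv/σ)
    (hd : d = Real.sqrt 2 * (vv * Real.sqrt L)/σ + w^2/2) :
    (Real.sqrt (2*Real.pi))⁻¹ * Real.exp (-(s+w)^2/2)
      = a * h * s * Real.exp (-d) := by
  have hs0 : 0 < s := by rw [hs]; positivity
  have hs2 : s^2 = 2*L := by rw [hs]; exact Real.sq_sqrt (by linarith)
  have hssb : s = Real.sqrt 2 * Real.sqrt L := by rw [hs, Real.sqrt_mul (by norm_num)]
  have hd' : d = s*vv/σ + w^2/2 := by rw [hd, hssb]; ring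
  have hsw : s * w = -(Real.log L/2) - Real.log (2*a*Real.sqrt Real.pi) + s*vv/σ := by
    rw [hw]; field_simp
  have hexp : -(s+w)^2/2 = -L + Real.log L/2 + Real.log (2*a*Real.sqrt Real.pi) - d := by
    rw [hd']; linear_combination (-1/2 : ℝ) * hs2 - hsw
  rw [hexp]
  have h1 : Real.exp (-L + Real.log L/2 + Real.log (2*a*Real.sqrt Real.pi) - d)
      = Real.exp (-L) * Real.exp (Real.log L/2) * Real.exp (Real.log (2*a*Real.sqrt Real.pi)) * Real.exp (-d) := by
    rw [← Real.exp_add, ← Real.exp_add, ← Real.exp_add]; ring_nf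
  have h2 : Real.exp (-L) = h := by
    rw [← hLdef, Real.log_div one_ne_zero hh.ne', Real.log_one]
    simp [Real.exp_log hh]
  have h3 : Real.exp (Real.log L/2) = Real.sqrt L := by
    rw [← Real.log_sqrt hL.le, Real.exp_log (Real.sqrt_pos.2 hL)]
  have h4 : Real.exp (Real.log (2*a*Real.sqrt Real.pi)) = 2*a*Real.sqrt Real.pi := by
    apply Real.exp_log; positivity
  rw [h1, h2, h3, h4, hssb]
  have h5 : Real.sqrt (2*Real.pi) = Real.sqrt 2 * Real.sqrt Real.pi := Real.sqrt_mul (by norm_num) _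
  rw [h5]
  have h6 : Real.sqrt 2 * Real.sqrt 2 = 2 := Real.mul_self_sqrt (by norm_num)
  have hπ : 0 < Real.sqrt Real.pi := Real.sqrt_pos.2 Real.pi_pos
  have h2p : (0:ℝ) < Real.sqrt 2 := by positivity
  have key : (Real.sqrt 2*Real.sqrt Real.pi)⁻¹ * (2*Real.sqrt Real.pi) = Real.sqrt 2 := by
    field_simp
    nlinarith [h6]
  linear_combination (a*h*Real.sqrt L*Real.exp (-d)) * key

lemma stmt7_intExp (c l r : ℝ) (hc : c ≠ 0) :
    ∫ x in l..r, Real.exp (c*(x-r)) = (1 - Real.exp (c*(l-r)))/c := by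
  have hder : ∀ x ∈ Set.uIcc l r, HasDerivAt (fun y => Real.exp (c*(y-r))/c) (Real.exp (c*(x-r))) x := by
    intro x _
    have h1 : HasDerivAt (fun y : ℝ => c*(y-r)) c x := by
      simpa using ((hasDerivAt_id x).sub_const r).const_mul c
    have h2 := (Real.hasDerivAt_exp (c*(x-r))).comp x h1
    have h3 := h2.div_const c
    simpa [mul_div_cancel_right₀ _ hc] using h3
  have hint : IntervalIntegrable (fun x => Real.exp (c*(x-r))) volume l r :=
    (Real.continuous_exp.comp (by continuity)).intervalIntegrable _ _
  rw [intervalIntegral.integral_eq_sub_of_hasDerivAt hder hint]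
  rw [sub_self, mul_zero, Real.exp_zero]
  ring

lemma stmt7_probBounds (σ t : ℝ) (hσ : 0 < σ) (ht : 1 ≤ t) :
    (Real.sqrt (2*Real.pi))⁻¹ * Real.exp (-t^2/2) * ((1 - Real.exp (-((t+1/σ)*(2/σ))))/(t+1/σ))
      ≤ ∫ x in (-t-2/σ)..(-t), (Real.sqrt (2*Real.pi))⁻¹ * Real.exp (-x^2/2) ∧
    (∫ x in (-t-2/σ)..(-t), (Real.sqrt (2*Real.pi))⁻¹ * Real.exp (-x^2/2))
      ≤ (Real.sqrt (2*Real.pi))⁻¹ * Real.exp (-t^2/2) * ((1 - Real.exp (-(t*(2/σ))))/t) := by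
  set C := (Real.sqrt (2*Real.pi))⁻¹ with hC
  have hC0 : 0 < C := by rw [hC]; positivity
  have hb : 0 < 1/σ := by positivity
  have h2σ : (0:ℝ) < 2/σ := by positivity
  have h2σ' : 2/σ = 2*(1/σ) := by ring
  have hlr : -t-2/σ ≤ -t := by linarith
  have hcont : ∀ c : ℝ, IntervalIntegrable (fun x => C * Real.exp (-t^2/2) * Real.exp (c*(x-(-t)))) volume (-t-2/σ) (-t) :=
    fun c => (Continuous.mul continuous_const (Real.continuous_exp.comp (by continuity))).intervalIntegrable _ _
  have hgint : IntervalIntegrable (fun x => C * Real.exp (-x^2/2)) volume (-t-2/σ) (-t) :=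
    (Continuous.mul continuous_const (Real.continuous_exp.comp (by continuity))).intervalIntegrable _ _
  have hcalc : ∀ c : ℝ, c ≠ 0 → ∫ x in (-t-2/σ)..(-t), C * Real.exp (-t^2/2) * Real.exp (c*(x-(-t)))
      = C * Real.exp (-t^2/2) * ((1 - Real.exp (-(c*(2/σ))))/c) := by
    intro c hc
    rw [intervalIntegral.integral_const_mul, stmt7_intExp c _ _ hc]
    have : c * (-t-2/σ - -t) = -(c*(2/σ)) := by ring
    rw [this]
  constructor
  · have hmono := intervalIntegral.integral_mono_on hlr (hcont (t+1/σ)) hgint ?_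
    · rw [hcalc (t+1/σ) (by positivity)] at hmono
      exact hmono
    · intro x hx
      obtain ⟨hx1, hx2⟩ := hx
      have hu1 : x + t ≤ 0 := by linarith
      have hpos : 0 ≤ 1/σ + (x+t)/2 := by linarith
      have hexp : (t+1/σ)*(x-(-t)) + (-t^2/2) ≤ -x^2/2 := by
        nlinarith [mul_nonneg (neg_nonneg.2 hu1) hpos]
      calc C * Real.exp (-t^2/2) * Real.exp ((t+1/σ)*(x-(-t)))
          = C * Real.exp ((t+1/σ)*(x-(-t)) + (-t^2/2)) := by
            rw [mul_assoc, ← Real.exp_add, add_comm]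
        _ ≤ C * Real.exp (-x^2/2) := by
            exact mul_le_mul_of_nonneg_left (Real.exp_le_exp.2 hexp) hC0.le
  · have hmono := intervalIntegral.integral_mono_on hlr hgint (hcont t) ?_
    · rw [hcalc t (by positivity)] at hmono
      exact hmono
    · intro x hx
      have hexp : -x^2/2 ≤ t*(x-(-t)) + (-t^2/2) := by nlinarith [sq_nonneg (x+t)]
      calc C * Real.exp (-x^2/2) ≤ C * Real.exp (t*(x-(-t)) + (-t^2/2)) :=
            mul_le_mul_of_nonneg_left (Real.exp_le_exp.2 hexp) hC0.le
        _ = C * Real.exp (-t^2/2) * Real.exp (t*(x-(-t))) := by rw [Real.exp_add]; ring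

lemma div_le_div_of_nonneg_right' {x y c : ℝ} (hxy : x ≤ y) (hc : 0 < c) : x/c ≤ y/c :=
  by gcongr

lemma stmt7_div_shuffle (X Y t c : ℝ) : X*(Y/t)/c = X/(t*c)*Y := by
  simp only [div_eq_mul_inv, mul_inv]
  ring

lemma stmt7_measure_eq (σ u vv tt : ℝ) (hσ : 0 < σ) (htt : tt = (u + vv - 1)/σ) :
    ((gaussianReal 0 1) {x : ℝ | u + vv + σ * x ∈ Set.Icc (-1:ℝ) 1}).toReal
      = ∫ x in (-tt-2/σ)..(-tt), (Real.sqrt (2*Real.pi))⁻¹ * Real.exp (-x^2/2) := by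
  have h2σ : (0:ℝ) < 2/σ := by positivity
  have hlr : -tt-2/σ ≤ -tt := by linarith
  have hset : {x : ℝ | u + vv + σ * x ∈ Set.Icc (-1:ℝ) 1} = Set.Icc ((-1-u-vv)/σ) ((1-u-vv)/σ) := by
    ext x
    simp only [Set.mem_setOf_eq, Set.mem_Icc]
    rw [div_le_iff₀ hσ, le_div_iff₀ hσ]
    constructor <;> intro ⟨h1, h2⟩ <;> constructor <;> nlinarith
  have he1 : (-1-u-vv)/σ = -tt - 2/σ := by subst htt; ring
  have he2 : (1-u-vv)/σ = -tt := by subst htt; ring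
  rw [hset, he1, he2, gaussianReal_apply_eq_integral 0 one_ne_zero,
    ENNReal.toReal_ofReal (setIntegral_nonneg measurableSet_Icc (fun x _ => gaussianPDFReal_nonneg 0 1 x)),
    integral_Icc_eq_integral_Ioc, ← intervalIntegral.integral_of_le hlr]
  apply intervalIntegral.integral_congr
  intro x _
  simp [gaussianPDFReal]

theorem stmt_7 (σ a : ℝ) (hσ : 0 < σ) (ha : 0 < a) (v : ℝ → ℝ)
    (hv : Tendsto (fun h => v h * Real.sqrt (Real.log (1 / h)))
      (nhdsWithin 0 (Set.Ioi 0)) (nhds 0)) :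
    Tendsto (fun h =>
      ((gaussianReal 0 1) {x : ℝ | uHeight σ a h + v h + σ * x ∈ Set.Icc (-1 : ℝ) 1}).toReal
        / (a * h))
      (nhdsWithin 0 (Set.Ioi 0)) (nhds 1) := by
  have hC0 : (0:ℝ) < (Real.sqrt (2*Real.pi))⁻¹ := by positivity
  set F := nhdsWithin (0:ℝ) (Set.Ioi 0) with hF
  -- basic limits
  have hg : Tendsto (fun h : ℝ => Real.log (1/h)) F atTop := by
    have h1 : Tendsto (fun h : ℝ => 1/h) F atTop := by
      simpa [one_div] using tendsto_inv_nhdsGT_zero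
    exact Real.tendsto_log_atTop.comp h1
  have hs_top : Tendsto (fun h : ℝ => Real.sqrt (2 * Real.log (1/h))) F atTop :=
    stmt7_sqrt_atTop.comp (hg.const_mul_atTop two_pos)
  have hsg_top : Tendsto (fun h : ℝ => Real.sqrt (Real.log (1/h))) F atTop :=
    stmt7_sqrt_atTop.comp hg
  have hpos : ∀ᶠ h in F, (0:ℝ) < h := eventually_mem_nhdsWithin
  have hge : ∀ᶠ h in F, 1 < Real.log (1/h) := hg.eventually_gt_atTop 1
  have hv0 : Tendsto v F (nhds 0) := by
    have h1 := hv.mul hsg_top.inv_tendsto_atTop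
    rw [mul_zero] at h1
    apply h1.congr'
    filter_upwards [hge] with h hh
    exact mul_inv_cancel_right₀ (ne_of_gt (Real.sqrt_pos.2 (lt_trans one_pos hh))) (v h)
  have hlog : Tendsto (fun h : ℝ => Real.log (Real.log (1/h)) / Real.sqrt (2 * Real.log (1/h))) F (nhds 0) :=
    stmt7_log_div_sqrt.comp hg
  have hK : Tendsto (fun h : ℝ => Real.log (2*a*Real.sqrt Real.pi) / Real.sqrt (2*Real.log (1/h))) F (nhds 0) :=
    tendsto_const_nhds.div_atTop hs_top
  -- the correction terms
  set W : ℝ → ℝ := fun h => (-(Real.log (Real.log (1/h))/2) - Real.log (2*a*Real.sqrt Real.pi))/Real.sqrt (2*Real.log (1/h)) + v h/σ with hWdef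
  set T : ℝ → ℝ := fun h => (uHeight σ a h + v h - 1)/σ with hTdef
  set D : ℝ → ℝ := fun h => Real.sqrt 2 * (v h * Real.sqrt (Real.log (1/h)))/σ + (W h)^2/2 with hDdef
  have hw0 : Tendsto W F (nhds 0) := by
    have h1 := ((hlog.neg.div_const 2).sub hK).add (hv0.div_const σ)
    have h2 : Tendsto W F (nhds (-(0:ℝ)/2 - 0 + 0/σ)) := by
      apply h1.congr
      intro h
      simp only [hWdef]
      try ring
    simpa using h2
  have hd0 : Tendsto D F (nhds 0) := by
    have h1 := ((hv.const_mul (Real.sqrt 2)).div_const σ).add ((hw0.pow 2).div_const 2)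
    have h2 : Tendsto D F (nhds (Real.sqrt 2 * 0/σ + (0:ℝ)^2/2)) := by
      apply h1.congr
      intro h
      simp only [hDdef]
      try ring
    simpa using h2
  have ht_eq : ∀ᶠ h in F, T h = Real.sqrt (2*Real.log (1/h)) + W h := by
    filter_upwards [hge] with h hh
    have hL0 : (0:ℝ) < Real.log (1/h) := lt_trans one_pos hh
    exact stmt7_t_eq σ a h (Real.log (1/h)) (v h) _ (W h) hσ
      (Real.sqrt_pos.2 (by linarith)) rfl rfl rfl
  have ht_top : Tendsto T F atTop := by
    apply Tendsto.congr' _ (hs_top.atTop_add hw0)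
    filter_upwards [ht_eq] with h hh
    exact hh.symm
  have ht1 : ∀ᶠ h in F, 1 ≤ T h := ht_top.eventually_ge_atTop 1
  -- the central ratio limit
  have hts : Tendsto (fun h => T h / Real.sqrt (2*Real.log (1/h))) F (nhds 1) := by
    have h1 : Tendsto (fun h => 1 + W h / Real.sqrt (2*Real.log (1/h))) F (nhds (1+0)) :=
      tendsto_const_nhds.add (hw0.div_atTop hs_top)
    rw [add_zero] at h1
    apply h1.congr'
    filter_upwards [hge, ht_eq] with h hh hteq
    have hs0 : (0:ℝ) < Real.sqrt (2*Real.log (1/h)) := Real.sqrt_pos.2 (by linarith)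
    rw [hteq]
    field_simp
  have hexp1 : Tendsto (fun h => Real.exp (-(D h))) F (nhds 1) := by
    have hd0' : Tendsto (fun h => -(D h)) F (nhds 0) := by simpa using hd0.neg
    have := (Real.continuous_exp.tendsto 0).comp hd0'
    simpa [Function.comp_def] using this
  have hQ : Tendsto (fun h => (T h / Real.sqrt (2*Real.log (1/h)))⁻¹ * Real.exp (-(D h))) F (nhds 1) := by
    simpa using (hts.inv₀ one_ne_zero).mul hexp1
  have hR : Tendsto (fun h => (Real.sqrt (2*Real.pi))⁻¹ * Real.exp (-(T h)^2/2) / (T h * (a*h))) F (nhds 1) := by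
    apply hQ.congr'
    filter_upwards [hpos, hge, ht_eq, ht1] with h h0 h1g hteq hT1
    have hL0 : (0:ℝ) < Real.log (1/h) := lt_trans one_pos h1g
    have hE2 := stmt7_exp_eq σ a h (Real.log (1/h)) (v h) (Real.sqrt (2*Real.log (1/h))) (W h) (D h)
      hσ ha h0 hL0 rfl rfl rfl rfl
    rw [hteq] at hT1
    have hne : (0:ℝ) < Real.sqrt (2*Real.log (1/h)) + W h := by linarith
    rw [inv_div, hteq, hE2, eq_div_iff (ne_of_gt (mul_pos hne (mul_pos ha h0)))]
    have hdiv : (Real.sqrt (2*Real.log (1/h)) + W h)/(Real.sqrt (2*Real.log (1/h)) + W h) = 1 :=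
      div_self hne.ne'
    linear_combination (Real.sqrt (2*Real.log (1/h)) * Real.exp (-(D h)) * (a*h)) * hdiv
  -- bounding functions
  have hfrac : Tendsto (fun h => T h/(T h + 1/σ)) F (nhds 1) := by
    have h1 : Tendsto (fun h => (T h + 1/σ)/T h) F (nhds 1) := by
      have h2 : Tendsto (fun h => 1 + (1/σ)/T h) F (nhds (1+0)) :=
        tendsto_const_nhds.add (tendsto_const_nhds.div_atTop ht_top)
      rw [add_zero] at h2
      apply h2.congr'
      filter_upwards [ht1] with h hT1
      have : T h ≠ 0 := by linarith
      field_simp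
    have h3 := h1.inv₀ one_ne_zero
    rw [inv_one] at h3
    apply h3.congr
    intro h
    exact inv_div _ _
  have hE1 : Tendsto (fun h => 1 - Real.exp (-((T h + 1/σ)*(2/σ)))) F (nhds 1) := by
    have ha1 : Tendsto (fun h => (T h + 1/σ)*(2/σ)) F atTop :=
      (ht_top.atTop_add tendsto_const_nhds).atTop_mul_const (by positivity)
    have h2 := Real.tendsto_exp_atBot.comp (tendsto_neg_atTop_atBot.comp ha1)
    simpa using tendsto_const_nhds.sub h2
  have hE2' : Tendsto (fun h => 1 - Real.exp (-(T h*(2/σ)))) F (nhds 1) := by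
    have ha1 : Tendsto (fun h => T h*(2/σ)) F atTop :=
      ht_top.atTop_mul_const (by positivity)
    have h2 := Real.tendsto_exp_atBot.comp (tendsto_neg_atTop_atBot.comp ha1)
    simpa using tendsto_const_nhds.sub h2
  have hlo : Tendsto (fun h => ((Real.sqrt (2*Real.pi))⁻¹ * Real.exp (-(T h)^2/2) / (T h * (a*h))) * (T h/(T h + 1/σ)) * (1 - Real.exp (-((T h + 1/σ)*(2/σ))))) F (nhds 1) := by
    simpa using (hR.mul hfrac).mul hE1
  have hhi : Tendsto (fun h => ((Real.sqrt (2*Real.pi))⁻¹ * Real.exp (-(T h)^2/2) / (T h * (a*h))) * (1 - Real.exp (-(T h*(2/σ))))) F (nhds 1) := by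
    simpa using hR.mul hE2'
  -- squeeze
  refine tendsto_of_tendsto_of_tendsto_of_le_of_le' hlo hhi ?_ ?_
  · filter_upwards [hpos, ht1] with h h0 hT1
    have hmeq := stmt7_measure_eq σ (uHeight σ a h) (v h) (T h) hσ rfl
    rw [hmeq]
    obtain ⟨hb1, _⟩ := stmt7_probBounds σ (T h) hσ hT1
    have hah : (0:ℝ) < a*h := mul_pos ha h0
    have hT0 : T h ≠ 0 := by linarith
    have hTσ : T h + 1/σ ≠ 0 := by positivity
    calc ((Real.sqrt (2*Real.pi))⁻¹ * Real.exp (-(T h)^2/2) / (T h * (a*h))) * (T h/(T h + 1/σ)) * (1 - Real.exp (-((T h + 1/σ)*(2/σ))))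
        = ((Real.sqrt (2*Real.pi))⁻¹ * Real.exp (-(T h)^2/2) * ((1 - Real.exp (-((T h+1/σ)*(2/σ))))/(T h+1/σ)))/(a*h) := by
          field_simp
      _ ≤ (∫ x in (-(T h)-2/σ)..(-(T h)), (Real.sqrt (2*Real.pi))⁻¹ * Real.exp (-x^2/2))/(a*h) :=
          div_le_div_of_nonneg_right' hb1 hah
  · filter_upwards [hpos, ht1] with h h0 hT1
    have hmeq := stmt7_measure_eq σ (uHeight σ a h) (v h) (T h) hσ rfl
    rw [hmeq]
    obtain ⟨_, hb2⟩ := stmt7_probBounds σ (T h) hσ hT1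
    have hah : (0:ℝ) < a*h := mul_pos ha h0
    have hT0 : T h ≠ 0 := by linarith
    calc (∫ x in (-(T h)-2/σ)..(-(T h)), (Real.sqrt (2*Real.pi))⁻¹ * Real.exp (-x^2/2))/(a*h)
        ≤ ((Real.sqrt (2*Real.pi))⁻¹ * Real.exp (-(T h)^2/2) * ((1 - Real.exp (-(T h*(2/σ))))/T h))/(a*h) :=
          div_le_div_of_nonneg_right' hb2 hah
      _ = ((Real.sqrt (2*Real.pi))⁻¹ * Real.exp (-(T h)^2/2) / (T h * (a*h))) * (1 - Real.exp (-(T h*(2/σ)))) := by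
          exact stmt7_div_shuffle _ _ _ _
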